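/- Let H be a Hardy field containing ℒℰ and let f ∈ H be strongly non-polynomial with t^δ ≪ f(t) for some δ > 0. Then there exists c_0 ∈ (0,1) such that for every c ∈ (c_0, 1) there is a natural number k_0 with the function t ↦ t^c belonging to S(f, k_0). -/

import Mathlib

open Filter MeasureTheory Topology

noncomputable section

/-- `f ≺ g` : `f(t)/g(t) → 0` as `t → +∞`. -/
def Prec (f g : ℝ → ℝ) : Prop :=
  Filter.Tendsto (fun t => f t / g t) Filter.atTop (nhds 0)

/-- `f ≪ g` : `|f(t)| ≤ C |g(t)|` for some constant `C > 0` and all large `t`. -/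
def Dom (f g : ℝ → ℝ) : Prop :=
  ∃ C : ℝ, 0 < C ∧ ∀ᶠ t in Filter.atTop, |f t| ≤ C * |g t|

/-- `f` has polynomial growth: `f(t)/t^k → 0` for some positive integer `k`. -/
def PolyGrowth (f : ℝ → ℝ) : Prop :=
  ∃ k : ℕ, 0 < k ∧ Filter.Tendsto (fun t => f t / t ^ k) Filter.atTop (nhds 0)

/-- The logarithmico-exponential functions of Hardy: built from constants and the
identity by `+`, `-`, `*`, `/`, `exp`, `log` and composition. -/
inductive IsLE : (ℝ → ℝ) → Prop
  | const (c : ℝ) : IsLE fun _ => c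
  | id : IsLE fun t => t
  | add {f g} : IsLE f → IsLE g → IsLE (f + g)
  | sub {f g} : IsLE f → IsLE g → IsLE (f - g)
  | mul {f g} : IsLE f → IsLE g → IsLE (f * g)
  | div {f g} : IsLE f → IsLE g → IsLE (f / g)
  | exp {f} : IsLE f → IsLE fun t => Real.exp (f t)
  | log {f} : IsLE f → IsLE fun t => Real.log (f t)
  | comp {f g} : IsLE f → IsLE g → IsLE (f ∘ g)

/-- A Hardy field: a collection of (representatives of) germs at `+∞` of real functions,
closed under germ equality, forming a field under pointwise operations, and closed under
differentiation (each element is eventually differentiable, with derivative again in `H`). -/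
structure IsHardyField (H : Set (ℝ → ℝ)) : Prop where
  mem_congr : ∀ {f g : ℝ → ℝ}, f ∈ H → f =ᶠ[Filter.atTop] g → g ∈ H
  zero_mem : (fun _ : ℝ => (0 : ℝ)) ∈ H
  one_mem : (fun _ : ℝ => (1 : ℝ)) ∈ H
  add_mem : ∀ {f g : ℝ → ℝ}, f ∈ H → g ∈ H → f + g ∈ H
  neg_mem : ∀ {f : ℝ → ℝ}, f ∈ H → -f ∈ H
  mul_mem : ∀ {f g : ℝ → ℝ}, f ∈ H → g ∈ H → f * g ∈ H
  inv_mem : ∀ {f : ℝ → ℝ}, f ∈ H → ¬ (f =ᶠ[Filter.atTop] fun _ => (0 : ℝ)) →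
    (fun t => (f t)⁻¹) ∈ H
  eventuallyDifferentiable : ∀ {f : ℝ → ℝ}, f ∈ H →
    ∀ᶠ t in Filter.atTop, DifferentiableAt ℝ f t
  deriv_mem : ∀ {f : ℝ → ℝ}, f ∈ H → deriv f ∈ H

/-- `H` contains (the germs of) all logarithmico-exponential functions. -/
def ContainsLE (H : Set (ℝ → ℝ)) : Prop := ∀ f : ℝ → ℝ, IsLE f → f ∈ H

/-- strongly non-polynomial: `t^k ≺ f ≺ t^{k+1}` for some `k ∈ ℕ`, or `f(t) → 0`. -/
def StronglyNonPoly (f : ℝ → ℝ) : Prop :=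
  (∃ k : ℕ, Prec (fun t => t ^ k) f ∧ Prec f fun t => t ^ (k + 1)) ∨
    Filter.Tendsto f Filter.atTop (nhds 0)


/-- The class `S(f,k)`: all `g ∈ H` with `g(t) ≺ t`, such that the limit of
`g(t)·|f⁽ᵏ⁾(t)|^{1/k}` as `t → +∞` is nonzero (possibly `±∞`), and
`g(t) ≺ |f⁽ᵏ⁺¹⁾(t)|^{-1/(k+1)}`. -/
def SClass (H : Set (ℝ → ℝ)) (f : ℝ → ℝ) (k : ℕ) : Set (ℝ → ℝ) :=
  {g | g ∈ H ∧ Prec g (fun t => t) ∧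
    ((∃ c : ℝ, c ≠ 0 ∧ Filter.Tendsto
        (fun t => g t * |iteratedDeriv k f t| ^ ((k : ℝ)⁻¹)) Filter.atTop (nhds c)) ∨
      Filter.Tendsto (fun t => g t * |iteratedDeriv k f t| ^ ((k : ℝ)⁻¹))
        Filter.atTop Filter.atTop ∨
      Filter.Tendsto (fun t => g t * |iteratedDeriv k f t| ^ ((k : ℝ)⁻¹))
        Filter.atTop Filter.atBot) ∧
    Prec g fun t => |iteratedDeriv (k + 1) f t| ^ (-(1 : ℝ) / (k + 1))}

section Generic
open Filter Topology Set

theorem monotoneOn_Ici_of_deriv_nonneg' {ψ : ℝ → ℝ} {T : ℝ}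
    (h : ∀ t ∈ Set.Ici T, DifferentiableAt ℝ ψ t) (h' : ∀ t ∈ Set.Ici T, 0 ≤ deriv ψ t) :
    MonotoneOn ψ (Set.Ici T) := by
  apply monotoneOn_of_deriv_nonneg (convex_Ici T)
  · intro x hx; exact (h x hx).continuousAt.continuousWithinAt
  · intro x hx; rw [interior_Ici] at hx; exact (h x (Set.mem_Ici.2 (le_of_lt (Set.mem_Ioi.1 hx)))).differentiableWithinAt
  · intro x hx; rw [interior_Ici] at hx; exact h' x (Set.mem_Ici.2 (le_of_lt (Set.mem_Ioi.1 hx)))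

theorem antitoneOn_Ici_of_deriv_nonpos' {ψ : ℝ → ℝ} {T : ℝ}
    (h : ∀ t ∈ Set.Ici T, DifferentiableAt ℝ ψ t) (h' : ∀ t ∈ Set.Ici T, deriv ψ t ≤ 0) :
    AntitoneOn ψ (Set.Ici T) := by
  apply antitoneOn_of_deriv_nonpos (convex_Ici T)
  · intro x hx; exact (h x hx).continuousAt.continuousWithinAt
  · intro x hx; rw [interior_Ici] at hx; exact (h x (Set.mem_Ici.2 (le_of_lt (Set.mem_Ioi.1 hx)))).differentiableWithinAt
  · intro x hx; rw [interior_Ici] at hx; exact h' x (Set.mem_Ici.2 (le_of_lt (Set.mem_Ioi.1 hx)))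

theorem tendsto_of_monotoneOn_Ici {ψ : ℝ → ℝ} {T : ℝ} (hm : MonotoneOn ψ (Set.Ici T)) :
    Tendsto ψ atTop atTop ∨ ∃ l, Tendsto ψ atTop (nhds l) := by
  set ψ' : ℝ → ℝ := fun s => ψ (max s T) with hψ'
  have hmono : Monotone ψ' := fun a b hab =>
    hm (le_max_right a T) (le_max_right b T) (max_le_max hab le_rfl)
  have heq : ψ' =ᶠ[atTop] ψ := by
    filter_upwards [eventually_ge_atTop T] with t ht
    simp [hψ', max_eq_left ht]
  rcases tendsto_of_monotone hmono with h | ⟨l, h⟩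
  · exact Or.inl (h.congr' heq)
  · exact Or.inr ⟨l, h.congr' heq⟩

theorem tendsto_of_antitoneOn_Ici {ψ : ℝ → ℝ} {T : ℝ} (hm : AntitoneOn ψ (Set.Ici T)) :
    Tendsto ψ atTop atBot ∨ ∃ l, Tendsto ψ atTop (nhds l) := by
  have hm' : MonotoneOn (fun t => -ψ t) (Set.Ici T) := fun a ha b hb hab =>
    neg_le_neg (hm ha hb hab)
  have hψ : ψ = fun t => -(-ψ t) := by funext t; simp
  rcases tendsto_of_monotoneOn_Ici hm' with h | ⟨l, h⟩
  · left; rw [hψ]; exact tendsto_neg_atTop_atBot.comp h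
  · right; exact ⟨-l, by rw [hψ]; exact h.neg⟩

theorem trichotomy_of_deriv (φ : ℝ → ℝ)
    (hd : ∀ᶠ t in atTop, DifferentiableAt ℝ φ t)
    (hs : (∀ᶠ t in atTop, 0 ≤ deriv φ t) ∨ (∀ᶠ t in atTop, deriv φ t ≤ 0)) :
    Tendsto φ atTop atTop ∨ Tendsto φ atTop atBot ∨ ∃ l, Tendsto φ atTop (nhds l) := by
  rcases hs with h | h
  · obtain ⟨T, hT⟩ := eventually_atTop.1 (hd.and h)
    have := tendsto_of_monotoneOn_Ici (monotoneOn_Ici_of_deriv_nonneg'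
      (fun t ht => (hT t ht).1) (fun t ht => (hT t ht).2))
    tauto
  · obtain ⟨T, hT⟩ := eventually_atTop.1 (hd.and h)
    have := tendsto_of_antitoneOn_Ici (antitoneOn_Ici_of_deriv_nonpos'
      (fun t ht => (hT t ht).1) (fun t ht => (hT t ht).2))
    tauto

end Generic

section HardyLemmas
open Filter Topology Set

variable {H : Set (ℝ → ℝ)}

theorem IsHardyField.iteratedDeriv_mem (hH : IsHardyField H) {f : ℝ → ℝ} (hf : f ∈ H) :
    ∀ n : ℕ, iteratedDeriv n f ∈ H := by
  intro n
  induction n with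
  | zero => simpa [iteratedDeriv_zero] using hf
  | succ n ih => rw [iteratedDeriv_succ]; exact hH.deriv_mem ih

theorem IsHardyField.ev_ne_zero (hH : IsHardyField H) {g : ℝ → ℝ} (hg : g ∈ H)
    (hz : ¬ (g =ᶠ[atTop] fun _ => (0 : ℝ))) : ∀ᶠ t in atTop, g t ≠ 0 := by
  have hinv := hH.inv_mem hg hz
  have hmul := hH.mul_mem hg hinv
  obtain ⟨T, hT⟩ := eventually_atTop.1 (hH.eventuallyDifferentiable hmul)
  rw [eventually_atTop]
  refine ⟨T, fun t ht => ?_⟩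
  by_contra h0
  have hfreq : ∃ᶠ s in atTop, g s ≠ 0 := Filter.not_eventually.1 hz
  obtain ⟨s, hs, hgs⟩ := (frequently_atTop.1 hfreq) t
  set h : ℝ → ℝ := g * fun u => (g u)⁻¹ with hh
  have hval : ∀ u, h u = 0 ∨ h u = 1 := by
    intro u
    rcases eq_or_ne (g u) 0 with h1 | h1
    · left; simp [hh, h1]
    · right; simp [hh, mul_inv_cancel₀ h1]
  have hcont : ContinuousOn h (Icc t s) := by
    intro x hx
    exact (hT x (le_trans ht hx.1)).continuousAt.continuousWithinAt
  have hts : t ≤ s := hs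
  have h0' : h t = 0 := by simp [hh, h0]
  have h1' : h s = 1 := by simp [hh, mul_inv_cancel₀ hgs]
  have hmem : (1/2 : ℝ) ∈ Icc (h t) (h s) := by rw [h0', h1']; norm_num
  obtain ⟨x, _, hx⟩ := intermediate_value_Icc hts hcont hmem
  rcases hval x with h2 | h2 <;> rw [hx] at h2 <;> norm_num at h2

theorem IsHardyField.sign_trichotomy (hH : IsHardyField H) {g : ℝ → ℝ} (hg : g ∈ H) :
    (g =ᶠ[atTop] fun _ => (0 : ℝ)) ∨ (∀ᶠ t in atTop, 0 < g t) ∨ (∀ᶠ t in atTop, g t < 0) := by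
  by_cases hz : g =ᶠ[atTop] fun _ => (0 : ℝ)
  · exact Or.inl hz
  right
  obtain ⟨T, hT⟩ := eventually_atTop.1 ((hH.ev_ne_zero hg hz).and (hH.eventuallyDifferentiable hg))
  have hcont : ∀ a b, T ≤ a → ContinuousOn g (Icc a b) := by
    intro a b ha x hx
    exact (hT x (le_trans ha hx.1)).2.continuousAt.continuousWithinAt
  rcases lt_or_gt_of_ne (hT T le_rfl).1 with hneg | hpos
  · right; rw [eventually_atTop]; refine ⟨T, fun t ht => ?_⟩
    by_contra hc; push_neg at hc
    have hc' : 0 < g t := lt_of_le_of_ne hc (Ne.symm (hT t ht).1)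
    have hmem : (0:ℝ) ∈ Icc (g T) (g t) := ⟨le_of_lt hneg, le_of_lt hc'⟩
    obtain ⟨x, hx1, hx2⟩ := intermediate_value_Icc ht (hcont T t le_rfl) hmem
    exact (hT x hx1.1).1 hx2
  · left; rw [eventually_atTop]; refine ⟨T, fun t ht => ?_⟩
    by_contra hc; push_neg at hc
    have hc' : g t < 0 := lt_of_le_of_ne hc (hT t ht).1
    have hmem : (0:ℝ) ∈ Icc (g t) (g T) := ⟨le_of_lt hc', le_of_lt hpos⟩
    obtain ⟨x, hx1, hx2⟩ := intermediate_value_Icc' ht (hcont T t le_rfl) hmem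
    exact (hT x hx1.1).1 hx2

theorem IsHardyField.deriv_sign (hH : IsHardyField H) {g : ℝ → ℝ} (hg : g ∈ H) :
    (∀ᶠ t in atTop, 0 ≤ deriv g t) ∨ (∀ᶠ t in atTop, deriv g t ≤ 0) := by
  rcases hH.sign_trichotomy (hH.deriv_mem hg) with h | h | h
  · left; filter_upwards [h] with t ht; simp [ht]
  · left; filter_upwards [h] with t ht; exact le_of_lt ht
  · right; filter_upwards [h] with t ht; exact le_of_lt ht

theorem IsHardyField.limit_trichotomy (hH : IsHardyField H) {g : ℝ → ℝ} (hg : g ∈ H) :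
    Tendsto g atTop atTop ∨ Tendsto g atTop atBot ∨ ∃ l, Tendsto g atTop (nhds l) :=
  trichotomy_of_deriv g (hH.eventuallyDifferentiable hg) (hH.deriv_sign hg)

/-- |g| is eventually monotone or antitone for g in a Hardy field. -/
theorem IsHardyField.abs_ev_monotone (hH : IsHardyField H) {g : ℝ → ℝ} (hg : g ∈ H) :
    ∃ T, MonotoneOn (fun t => |g t|) (Set.Ici T) ∨ AntitoneOn (fun t => |g t|) (Set.Ici T) := by
  rcases hH.sign_trichotomy hg with hz | hs | hs
  · obtain ⟨T, hT⟩ := eventually_atTop.1 hz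
    refine ⟨T, Or.inl ?_⟩
    intro a ha b hb _
    simp only [hT a ha, hT b hb, le_refl, abs_zero]
  · rcases hH.deriv_sign hg with hd | hd
    · obtain ⟨T, hT⟩ := eventually_atTop.1
        ((hs.and (hH.eventuallyDifferentiable hg)).and hd)
      refine ⟨T, Or.inl ?_⟩
      have hm : MonotoneOn g (Set.Ici T) := monotoneOn_Ici_of_deriv_nonneg'
        (fun t ht => (hT t ht).1.2) (fun t ht => (hT t ht).2)
      intro a ha b hb hab
      show |g _| ≤ |g _|
      rw [abs_of_pos (hT a ha).1.1, abs_of_pos (hT b hb).1.1]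
      exact hm ha hb hab
    · obtain ⟨T, hT⟩ := eventually_atTop.1
        ((hs.and (hH.eventuallyDifferentiable hg)).and hd)
      refine ⟨T, Or.inr ?_⟩
      have hm : AntitoneOn g (Set.Ici T) := antitoneOn_Ici_of_deriv_nonpos'
        (fun t ht => (hT t ht).1.2) (fun t ht => (hT t ht).2)
      intro a ha b hb hab
      show |g _| ≤ |g _|
      rw [abs_of_pos (hT a ha).1.1, abs_of_pos (hT b hb).1.1]
      exact hm ha hb hab
  · rcases hH.deriv_sign hg with hd | hd
    · obtain ⟨T, hT⟩ := eventually_atTop.1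
        ((hs.and (hH.eventuallyDifferentiable hg)).and hd)
      refine ⟨T, Or.inr ?_⟩
      have hm : MonotoneOn g (Set.Ici T) := monotoneOn_Ici_of_deriv_nonneg'
        (fun t ht => (hT t ht).1.2) (fun t ht => (hT t ht).2)
      intro a ha b hb hab
      show |g _| ≤ |g _|
      rw [abs_of_neg (hT a ha).1.1, abs_of_neg (hT b hb).1.1]
      exact neg_le_neg (hm ha hb hab)
    · obtain ⟨T, hT⟩ := eventually_atTop.1
        ((hs.and (hH.eventuallyDifferentiable hg)).and hd)
      refine ⟨T, Or.inl ?_⟩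
      have hm : AntitoneOn g (Set.Ici T) := antitoneOn_Ici_of_deriv_nonpos'
        (fun t ht => (hT t ht).1.2) (fun t ht => (hT t ht).2)
      intro a ha b hb hab
      show |g _| ≤ |g _|
      rw [abs_of_neg (hT a ha).1.1, abs_of_neg (hT b hb).1.1]
      exact neg_le_neg (hm ha hb hab)

end HardyLemmas

section Analytic
open Filter Topology Set

theorem exists_deriv_slope {g : ℝ → ℝ} {a b : ℝ} (hab : a < b)
    (hd : ∀ t ∈ Icc a b, DifferentiableAt ℝ g t) :
    ∃ ξ ∈ Ioo a b, deriv g ξ = (g b - g a) / (b - a) :=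
  exists_deriv_eq_slope g hab (fun t ht => (hd t ht).continuousAt.continuousWithinAt)
    (fun t ht => (hd t (Ioo_subset_Icc_self ht)).differentiableWithinAt)

theorem deriv_bound_of_bound {H : Set (ℝ → ℝ)} (hH : IsHardyField H) {g : ℝ → ℝ}
    (hg : g ∈ H) {C m : ℝ} (hC : 0 < C)
    (hb : ∀ᶠ t in atTop, |g t| ≤ C * t ^ m) :
    ∃ C' : ℝ, 0 < C' ∧ ∀ᶠ t in atTop, |deriv g t| ≤ C' * t ^ (m - 1) := by
  obtain ⟨T₀, hmono⟩ := hH.abs_ev_monotone (hH.deriv_mem hg)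
  obtain ⟨T₁, hd⟩ := eventually_atTop.1 (hH.eventuallyDifferentiable hg)
  obtain ⟨T₂, hB⟩ := eventually_atTop.1 hb
  set T : ℝ := max (max T₀ T₁) (max T₂ 1) with hT
  have hT1 : (1:ℝ) ≤ T := le_trans (le_max_right T₂ 1) (le_max_right _ _)
  have hTT₀ : T₀ ≤ T := le_trans (le_max_left T₀ T₁) (le_max_left _ _)
  have hTT₁ : T₁ ≤ T := le_trans (le_max_right T₀ T₁) (le_max_left _ _)
  have hTT₂ : T₂ ≤ T := le_trans (le_max_left T₂ 1) (le_max_right _ _)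
  rcases hmono with hm | hm
  · -- |g'| monotone : use [t, 2t]
    refine ⟨C * (2 ^ m + 1), by positivity, ?_⟩
    rw [eventually_atTop]
    refine ⟨T, fun t ht => ?_⟩
    have ht0 : (0:ℝ) < t := lt_of_lt_of_le one_pos (le_trans hT1 ht)
    have h2t : t < 2 * t := by linarith
    obtain ⟨ξ, hξ, hslope⟩ := exists_deriv_slope h2t
      (fun u hu => hd u (le_trans (le_trans hTT₁ ht) hu.1))
    have habs : |deriv g t| ≤ |deriv g ξ| :=
      hm (le_trans hTT₀ ht) (le_trans hTT₀ (le_trans ht (le_of_lt hξ.1)))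
        (le_of_lt hξ.1)
    have hnum : |g (2*t) - g t| ≤ C * (2*t) ^ m + C * t ^ m := by
      calc |g (2*t) - g t| ≤ |g (2*t)| + |g t| := abs_sub _ _
        _ ≤ C * (2*t) ^ m + C * t ^ m := by
            gcongr
            · exact hB (2*t) (le_trans (le_trans hTT₂ ht) (le_of_lt h2t))
            · exact hB t (le_trans hTT₂ ht)
    have h2tm : (2*t : ℝ) ^ m = 2 ^ m * t ^ m :=
      Real.mul_rpow (by norm_num) (le_of_lt ht0)
    have htm : t ^ (m - 1) = t ^ m / t := by
      rw [Real.rpow_sub ht0, Real.rpow_one]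
    calc |deriv g t| ≤ |deriv g ξ| := habs
      _ = |g (2*t) - g t| / t := by
          rw [hslope, abs_div]
          congr 1
          rw [abs_of_pos (by linarith : (0:ℝ) < 2*t - t)]
          ring
      _ ≤ (C * (2*t) ^ m + C * t ^ m) / t := by
          gcongr
      _ = C * (2 ^ m + 1) * t ^ (m - 1) := by
          rw [h2tm, htm]; field_simp
  · -- |g'| antitone : use [t/2, t]
    refine ⟨2 * C * (2 ^ (-m) + 1), by positivity, ?_⟩
    rw [eventually_atTop]
    refine ⟨2 * T, fun t ht => ?_⟩
    have hT0 : (0:ℝ) < T := lt_of_lt_of_le one_pos hT1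
    have ht0 : (0:ℝ) < t := by linarith
    have hth : T ≤ t / 2 := by linarith
    have h2t : t / 2 < t := by linarith
    obtain ⟨ξ, hξ, hslope⟩ := exists_deriv_slope h2t
      (fun u hu => hd u (le_trans hTT₁ (le_trans hth hu.1)))
    have habs : |deriv g t| ≤ |deriv g ξ| :=
      hm (le_trans hTT₀ (le_trans hth (le_of_lt hξ.1)))
        (le_trans hTT₀ (le_trans hth (le_of_lt h2t))) (le_of_lt hξ.2)
    have hnum : |g t - g (t/2)| ≤ C * t ^ m + C * (t/2) ^ m := by
      calc |g t - g (t/2)| ≤ |g t| + |g (t/2)| := abs_sub _ _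
        _ ≤ C * t ^ m + C * (t/2) ^ m := by
            gcongr
            · exact hB t (le_trans hTT₂ (le_trans hth (le_of_lt h2t)))
            · exact hB (t/2) (le_trans hTT₂ hth)
    have h2tm : ((t/2 : ℝ)) ^ m = 2 ^ (-m) * t ^ m := by
      rw [div_eq_mul_inv, mul_comm, Real.mul_rpow (by positivity) (le_of_lt ht0)]
      congr 1
      rw [← Real.rpow_neg_one (2:ℝ), ← Real.rpow_mul (by norm_num : (0:ℝ) ≤ 2)]
      norm_num
    have htm : t ^ (m - 1) = t ^ m / t := by
      rw [Real.rpow_sub ht0, Real.rpow_one]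
    calc |deriv g t| ≤ |deriv g ξ| := habs
      _ = |g t - g (t/2)| / (t/2) := by
          rw [hslope, abs_div]
          congr 1
          rw [abs_of_pos (by linarith : (0:ℝ) < t - t/2)]
          ring
      _ ≤ (C * t ^ m + C * (t/2) ^ m) / (t/2) := by
          gcongr
      _ = 2 * C * (2 ^ (-m) + 1) * t ^ (m - 1) := by
          rw [h2tm, htm]; field_simp; ring
end Analytic

section Analytic2
open Filter Topology Set

theorem iter_deriv_bound {H : Set (ℝ → ℝ)} (hH : IsHardyField H) {f : ℝ → ℝ}
    (hf : f ∈ H) {C m : ℝ} (hC : 0 < C)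
    (hb : ∀ᶠ t in atTop, |f t| ≤ C * t ^ m) (j : ℕ) :
    ∃ C' : ℝ, 0 < C' ∧ ∀ᶠ t in atTop, |iteratedDeriv j f t| ≤ C' * t ^ (m - j) := by
  induction j with
  | zero =>
    refine ⟨C, hC, ?_⟩
    simpa [iteratedDeriv_zero] using hb
  | succ j ih =>
    obtain ⟨C', hC', hb'⟩ := ih
    obtain ⟨C'', hC'', hb''⟩ := deriv_bound_of_bound hH (hH.iteratedDeriv_mem hf j) hC' hb'
    refine ⟨C'', hC'', ?_⟩
    rw [iteratedDeriv_succ]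
    have : m - (j:ℝ) - 1 = m - ((j:ℕ)+1 : ℕ) := by push_cast; ring
    rwa [this] at hb''

theorem rpow_mem {H : Set (ℝ → ℝ)} (hH : IsHardyField H) (hLE : ContainsLE H) (c : ℝ) :
    (fun t : ℝ => t ^ c) ∈ H := by
  have hmul : IsLE ((fun _ : ℝ => c) * fun s => Real.log s) :=
    IsLE.mul (IsLE.const c) (IsLE.log IsLE.id)
  have h1 : IsLE fun t : ℝ => Real.exp (c * Real.log t) := IsLE.exp hmul
  apply hH.mem_congr (hLE _ h1)
  filter_upwards [eventually_gt_atTop 0] with t ht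
  rw [Real.rpow_def_of_pos ht, mul_comm]

theorem lower_bound_deriv {H : Set (ℝ → ℝ)} (hH : IsHardyField H) (hLE : ContainsLE H)
    {f : ℝ → ℝ} (hf : f ∈ H) {δ C : ℝ} (hδ : 0 < δ) (hC : 0 < C)
    (hfl : ∀ᶠ t in atTop, t ^ δ ≤ C * |f t|) :
    ∃ ε : ℝ, 0 < ε ∧ ∀ᶠ t in atTop, ε * t ^ (δ - 1) ≤ |deriv f t| := by
  have hne : ∀ᶠ t in atTop, f t ≠ 0 := by
    filter_upwards [hfl, eventually_ge_atTop 1] with t h1 h2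
    intro h0
    rw [h0] at h1
    simp only [abs_zero, mul_zero] at h1
    have : (0:ℝ) < t ^ δ := Real.rpow_pos_of_pos (by linarith) δ
    linarith
  have hnz : ¬ (f =ᶠ[atTop] fun _ => (0:ℝ)) := by
    intro h
    obtain ⟨t, h1, h2⟩ := (hne.and h).exists
    exact h1 h2
  have hid : (fun t : ℝ => t) ∈ H := hLE _ IsLE.id
  set v : ℝ → ℝ := (fun t : ℝ => t) * deriv f * fun t => (f t)⁻¹ with hv
  have hvH : v ∈ H := hH.mul_mem (hH.mul_mem hid (hH.deriv_mem hf)) (hH.inv_mem hf hnz)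
  -- key contradiction: v cannot be eventually ≤ r for r < δ
  have hcontra : ∀ r : ℝ, r < δ → (∀ᶠ t in atTop, v t ≤ r) → False := by
    intro r hr hev
    obtain ⟨T, hT⟩ := eventually_atTop.1
      ((((hne.and (hH.eventuallyDifferentiable hf)).and hev).and hfl).and
        (eventually_ge_atTop 1))
    set ψ : ℝ → ℝ := fun t => Real.log (f t) - r * Real.log t with hψ
    have hder : ∀ t ∈ Ici T, HasDerivAt ψ (deriv f t / f t - r * t⁻¹) t := by
      intro t ht
      have h1 : (1:ℝ) ≤ t := le_trans (hT T le_rfl).2 ht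
      have ht0 : (0:ℝ) < t := by linarith
      have hft : f t ≠ 0 := (hT t ht).1.1.1.1
      have hdf : HasDerivAt f (deriv f t) t := (hT t ht).1.1.1.2.hasDerivAt
      exact (hdf.log hft).sub ((Real.hasDerivAt_log (ne_of_gt ht0)).const_mul r)
    have hanti : AntitoneOn ψ (Ici T) := by
      apply antitoneOn_Ici_of_deriv_nonpos'
      · intro t ht; exact (hder t ht).differentiableAt
      · intro t ht
        rw [(hder t ht).deriv]
        have h1 : (1:ℝ) ≤ t := le_trans (hT T le_rfl).2 ht
        have ht0 : (0:ℝ) < t := by linarith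
        have hft : f t ≠ 0 := (hT t ht).1.1.1.1
        have hvt : v t ≤ r := (hT t ht).1.1.2
        have : deriv f t / f t = v t / t := by
          rw [hv]; simp only [Pi.mul_apply]
          field_simp
        rw [this]
        have : v t / t - r * t⁻¹ = (v t - r) / t := by field_simp
        rw [this]
        apply div_nonpos_of_nonpos_of_nonneg (by linarith) (le_of_lt ht0)
    -- bound |f t| ≤ exp (ψ T) * t ^ r for t ≥ T, contradicting t^δ ≤ C |f t|
    have hbound : ∀ t ∈ Ici T, t ^ (δ - r) ≤ C * Real.exp (ψ T) := by
      intro t ht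
      have h1 : (1:ℝ) ≤ t := le_trans (hT T le_rfl).2 ht
      have ht0 : (0:ℝ) < t := by linarith
      have hft : f t ≠ 0 := (hT t ht).1.1.1.1
      have hψt : ψ t ≤ ψ T := hanti (Set.mem_Ici.2 le_rfl) ht ht
      have habs : |f t| ≤ Real.exp (ψ T) * t ^ r := by
        have : |f t| = Real.exp (Real.log (f t)) := by
          rw [← Real.log_abs, Real.exp_log (abs_pos.2 hft)]
        rw [this]
        have hlog : Real.log (f t) ≤ ψ T + r * Real.log t := by
          have e1 : ψ t = Real.log (f t) - r * Real.log t := rfl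
          linarith [hψt]
        calc Real.exp (Real.log (f t)) ≤ Real.exp (ψ T + r * Real.log t) :=
              Real.exp_le_exp.2 hlog
          _ = Real.exp (ψ T) * t ^ r := by
              rw [Real.exp_add, Real.rpow_def_of_pos ht0, mul_comm r]
      have hfl' : t ^ δ ≤ C * |f t| := (hT t ht).1.2
      have h2 : t ^ δ ≤ C * Real.exp (ψ T) * t ^ r := by
        calc t ^ δ ≤ C * |f t| := hfl'
          _ ≤ C * (Real.exp (ψ T) * t ^ r) := by
              apply mul_le_mul_of_nonneg_left habs (le_of_lt hC)
          _ = C * Real.exp (ψ T) * t ^ r := by ring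
      have h3 : t ^ δ = t ^ (δ - r) * t ^ r := by
        rw [← Real.rpow_add ht0]; ring_nf
      rw [h3] at h2
      have htr : (0:ℝ) < t ^ r := Real.rpow_pos_of_pos ht0 r
      calc t ^ (δ - r) = t ^ (δ - r) * t ^ r / t ^ r := by field_simp
        _ ≤ C * Real.exp (ψ T) * t ^ r / t ^ r := by gcongr
        _ = C * Real.exp (ψ T) := by field_simp
    -- but t ^ (δ - r) → ∞
    have htop : Tendsto (fun t : ℝ => t ^ (δ - r)) atTop atTop :=
      tendsto_rpow_atTop (by linarith)
    obtain ⟨t, ht1, ht2⟩ :=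
      ((htop.eventually_gt_atTop (C * Real.exp (ψ T))).and (eventually_ge_atTop T)).exists
    exact absurd (hbound t ht2) (not_le.2 ht1)
  -- hence eventually δ/2 ≤ v
  have hev2 : ∀ᶠ t in atTop, δ / 2 ≤ v t := by
    rcases hH.limit_trichotomy hvH with h | h | h
    · exact h.eventually_ge_atTop _
    · exfalso
      exact hcontra (δ/2) (by linarith) (h.eventually_le_atBot _)
    · obtain ⟨l, hl⟩ := h
      rcases le_or_gt δ l with h1 | h1
      · have : ∀ᶠ x in nhds l, δ/2 < x := eventually_gt_nhds (by linarith)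
        filter_upwards [hl.eventually this] with t ht using le_of_lt ht
      · exfalso
        apply hcontra ((l + δ)/2) (by linarith)
        have : ∀ᶠ x in nhds l, x < (l + δ)/2 := eventually_lt_nhds (by linarith)
        filter_upwards [hl.eventually this] with t ht using le_of_lt ht
  refine ⟨δ / (2 * C), by positivity, ?_⟩
  filter_upwards [hev2, hfl, hne, eventually_ge_atTop 1] with t h1 h2 h3 h4
  have ht0 : (0:ℝ) < t := by linarith
  have habsv : t * |deriv f t| * |f t|⁻¹ = |v t| := by
    rw [hv]; simp only [Pi.mul_apply]
    rw [abs_mul, abs_mul, abs_inv, abs_of_pos ht0]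
  have hvpos : δ/2 ≤ |v t| := le_trans h1 (le_abs_self _)
  have hfabs : (0:ℝ) < |f t| := abs_pos.2 h3
  have key : t * |deriv f t| ≥ (δ/2) * (t ^ δ / C) := by
    have h5 : t * |deriv f t| = |v t| * |f t| := by
      rw [← habsv]; field_simp
    rw [h5]
    have h6 : t ^ δ / C ≤ |f t| := by
      rw [div_le_iff₀ hC]
      linarith [h2]
    calc (δ/2) * (t ^ δ / C) ≤ |v t| * (t ^ δ / C) := by
          apply mul_le_mul_of_nonneg_right hvpos
          positivity
      _ ≤ |v t| * |f t| := by
          apply mul_le_mul_of_nonneg_left h6 (abs_nonneg _)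
  have key2 : δ / (2*C) * t ^ δ ≤ |deriv f t| * t := by
    have heq : δ/(2*C) * t ^ δ = (δ/2) * (t ^ δ / C) := by field_simp
    rw [heq]
    linarith [key]
  rw [Real.rpow_sub ht0, Real.rpow_one]
  calc δ/(2*C) * (t ^ δ / t) = (δ/(2*C) * t ^ δ) / t := by ring
    _ ≤ (|deriv f t| * t) / t := by gcongr
    _ = |deriv f t| := by field_simp
end Analytic2

/-- For `f` strongly non-polynomial in a Hardy field containing ℒℰ with
`t^δ ≪ f(t)` for some `δ > 0`, there is `c₀ ∈ (0,1)` such that for every `c ∈ (c₀,1)`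
the function `t ↦ t^c` lies in `S(f,k₀)` for some `k₀`. -/
theorem stmt_6 (H : Set (ℝ → ℝ)) (hH : IsHardyField H) (hLE : ContainsLE H)
    (f : ℝ → ℝ) (hf : f ∈ H) (hsnp : StronglyNonPoly f)
    (δ : ℝ) (hδ : 0 < δ) (hlow : Dom (fun t => t ^ δ) f) :
    ∃ c₀ : ℝ, 0 < c₀ ∧ c₀ < 1 ∧ ∀ c : ℝ, c₀ < c → c < 1 →
      ∃ k₀ : ℕ, (fun t : ℝ => t ^ c) ∈ SClass H f k₀ := by
  classical
  obtain ⟨C, hC, hlow'⟩ := hlow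
  have hfl : ∀ᶠ t in atTop, t ^ δ ≤ C * |f t| := by
    filter_upwards [hlow', eventually_gt_atTop 0] with t h1 h2
    rwa [abs_of_pos (Real.rpow_pos_of_pos h2 δ)] at h1
  -- exclude the `f → 0` branch
  obtain ⟨k, hk1, hk2⟩ : ∃ k : ℕ, Prec (fun t => t ^ k) f ∧ Prec f fun t => t ^ (k + 1) := by
    rcases hsnp with h | h
    · exact h
    · exfalso
      have h1 : ∀ᶠ t in atTop, C * |f t| < 1 := by
        have h0 := h.abs
        rw [abs_zero] at h0
        have h2 : Tendsto (fun t => C * |f t|) atTop (nhds (C * 0)) := h0.const_mul C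
        rw [mul_zero] at h2
        exact h2.eventually (eventually_lt_nhds one_pos)
      have h2 : ∀ᶠ t : ℝ in atTop, (1:ℝ) ≤ t ^ δ := by
        filter_upwards [eventually_ge_atTop 1] with t ht
        exact Real.one_le_rpow ht (le_of_lt hδ)
      obtain ⟨t, ht1, ht2, ht3⟩ := (hfl.and (h1.and h2)).exists
      linarith
  -- upper bound |f t| ≤ 1 * t ^ (k+1)
  have hub : ∀ᶠ t in atTop, |f t| ≤ 1 * t ^ ((k:ℝ) + 1) := by
    have h1 : Tendsto (fun t => f t / t ^ (k+1)) atTop (nhds 0) := hk2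
    have h2 : ∀ᶠ t in atTop, |f t / t ^ (k+1)| < 1 := by
      have h0 := h1.abs; rw [abs_zero] at h0
      exact h0.eventually (eventually_lt_nhds one_pos)
    filter_upwards [h2, eventually_gt_atTop 0] with t h3 ht0
    have hp : (0:ℝ) < t ^ (k+1) := pow_pos ht0 (k+1)
    rw [abs_div, abs_of_pos hp, div_lt_one hp] at h3
    have he : t ^ ((k:ℝ) + 1) = t ^ (k + 1 : ℕ) := by
      rw [← Real.rpow_natCast t (k+1)]
      push_cast; ring_nf
    rw [one_mul, he]
    exact le_of_lt h3
  obtain ⟨ε, hε, hlb⟩ := lower_bound_deriv hH hLE hf hδ hC hfl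
  refine ⟨max (1 - δ/2) (1/2), lt_max_of_lt_right one_half_pos,
    max_lt (by linarith) (by norm_num), ?_⟩
  intro c hc1 hc2
  have hc0 : (0:ℝ) < c := lt_of_lt_of_le one_half_pos (le_trans (le_max_right _ _) (le_of_lt hc1))
  have hcδ : δ/2 < c + δ - 1 := by
    have := lt_of_le_of_lt (le_max_left (1 - δ/2) (1/2)) hc1
    linarith
  have h1c : (0:ℝ) < 1 - c := by linarith
  -- the decay property
  set Z : ℕ → Prop := fun j =>
    Tendsto (fun t => t ^ (c * (j:ℝ)) * |iteratedDeriv j f t|) atTop (nhds 0) with hZdef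
  -- Z 1 fails
  have hZ1top : Tendsto (fun t => t ^ (c * ((1:ℕ):ℝ)) * |iteratedDeriv 1 f t|) atTop atTop := by
    apply tendsto_atTop_mono' atTop (f₁ := fun t => ε * t ^ (c + δ - 1))
    · filter_upwards [hlb, eventually_gt_atTop 0] with t h1 ht0
      rw [iteratedDeriv_one, Nat.cast_one, mul_one]
      calc ε * t ^ (c + δ - 1) = t ^ c * (ε * t ^ (δ - 1)) := by
            rw [show c + δ - 1 = c + (δ - 1) by ring, Real.rpow_add ht0]; ring
        _ ≤ t ^ c * |deriv f t| :=
            mul_le_mul_of_nonneg_left h1 (Real.rpow_nonneg (le_of_lt ht0) c)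
    · exact (tendsto_rpow_atTop (by linarith : (0:ℝ) < c + δ - 1)).const_mul_atTop hε
  have notZ1 : ¬ Z 1 := by
    intro hZ1
    have hZ1' : Tendsto (fun t => t ^ (c * ((1:ℕ):ℝ)) * |iteratedDeriv 1 f t|)
        atTop (nhds 0) := hZ1
    have h1 := hZ1top.eventually_gt_atTop 1
    have h2 : ∀ᶠ t in atTop, t ^ (c * ((1:ℕ):ℝ)) * |iteratedDeriv 1 f t| < 1 := by
      have h0 := hZ1'.abs; rw [abs_zero] at h0
      filter_upwards [h0.eventually (eventually_lt_nhds one_pos)] with t ht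
      exact lt_of_abs_lt ht
    obtain ⟨t, ht1, ht2⟩ := (h1.and h2).exists
    linarith
  -- Z J holds for large J
  have hex : ∃ j, 2 ≤ j ∧ Z j := by
    obtain ⟨C', hC', hJb⟩ := iter_deriv_bound hH hf one_pos hub
      (max 2 ⌈((k:ℝ) + 2) / (1 - c)⌉₊)
    set J := max 2 ⌈((k:ℝ) + 2) / (1 - c)⌉₊ with hJ
    refine ⟨J, le_max_left _ _, ?_⟩
    have hJge : ((k:ℝ) + 2) / (1 - c) ≤ (J:ℝ) := by
      calc ((k:ℝ) + 2) / (1 - c) ≤ (⌈((k:ℝ) + 2) / (1 - c)⌉₊ : ℝ) := Nat.le_ceil _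
        _ ≤ (J:ℝ) := Nat.cast_le.2 (le_max_right _ _)
    have hexp : c * (J:ℝ) + ((k:ℝ) + 1 - J) ≤ -1 := by
      have h5 : (k:ℝ) + 2 ≤ (J:ℝ) * (1 - c) := by
        rw [div_le_iff₀ h1c] at hJge; linarith
      nlinarith
    show Tendsto _ atTop (nhds 0)
    apply squeeze_zero' (g := fun t => C' * t ^ (c * (J:ℝ) + ((k:ℝ) + 1 - J)))
    · filter_upwards [eventually_gt_atTop 0] with t ht0
      exact mul_nonneg (Real.rpow_nonneg (le_of_lt ht0) _) (abs_nonneg _)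
    · filter_upwards [hJb, eventually_gt_atTop 0] with t h1 ht0
      rw [Real.rpow_add ht0]
      calc t ^ (c * (J:ℝ)) * |iteratedDeriv J f t|
          ≤ t ^ (c * (J:ℝ)) * (C' * t ^ ((k:ℝ) + 1 - J)) :=
            mul_le_mul_of_nonneg_left h1 (Real.rpow_nonneg (le_of_lt ht0) _)
        _ = C' * (t ^ (c * (J:ℝ)) * t ^ ((k:ℝ) + 1 - J)) := by ring
    · have hneg : (0:ℝ) < -(c * (J:ℝ) + ((k:ℝ) + 1 - J)) := by linarith
      have h6 : Tendsto (fun x : ℝ => x ^ (-(-(c * (J:ℝ) + ((k:ℝ) + 1 - J)))))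
          atTop (nhds 0) := tendsto_rpow_neg_atTop hneg
      rw [neg_neg] at h6
      simpa using h6.const_mul C'
  -- minimal j ≥ 2 with Z j
  obtain ⟨jstar, ⟨hj2, hjZ⟩, hmin⟩ :
      ∃ j, (2 ≤ j ∧ Z j) ∧ ∀ i, i < j → ¬(2 ≤ i ∧ Z i) :=
    ⟨Nat.find hex, Nat.find_spec hex, fun i hi => Nat.find_min hex hi⟩
  set k₀ := jstar - 1 with hk₀
  have hk₀1 : k₀ + 1 = jstar := by omega
  have hk₀pos : 1 ≤ k₀ := by omega
  have notZk₀ : ¬ Z k₀ := by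
    rcases eq_or_lt_of_le hk₀pos with h | h
    · rw [← h]; exact notZ1
    · intro hZk
      exact (hmin k₀ (by omega)) ⟨by omega, hZk⟩
  -- notation
  set N : ℝ → ℝ := iteratedDeriv k₀ f with hN
  set M : ℝ → ℝ := iteratedDeriv (k₀ + 1) f with hM
  have hNH : N ∈ H := hH.iteratedDeriv_mem hf k₀
  have hMH : M ∈ H := hH.iteratedDeriv_mem hf (k₀+1)
  have hMN : deriv N = M := (iteratedDeriv_succ).symm
  have hk₀R : (0:ℝ) < (k₀:ℝ) := by exact_mod_cast hk₀pos
  have hNnz : ¬ (N =ᶠ[atTop] fun _ => (0:ℝ)) := by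
    intro h
    apply notZk₀
    have heq : (fun t => t ^ (c * (k₀:ℝ)) * |N t|) =ᶠ[atTop] fun _ => (0:ℝ) := by
      filter_upwards [h] with t ht
      rw [ht]; simp
    show Tendsto (fun t => t ^ (c * (k₀:ℝ)) * |N t|) atTop (nhds 0)
    exact Tendsto.congr' heq.symm tendsto_const_nhds
  have hNne : ∀ᶠ t in atTop, N t ≠ 0 := hH.ev_ne_zero hNH hNnz
  have notZk₀' : ¬ Tendsto (fun t => t ^ (c * (k₀:ℝ)) * |N t|) atTop (nhds 0) := notZk₀
  refine ⟨k₀, rpow_mem hH hLE c, ?_, ?_, ?_⟩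
  · -- Prec (t^c) t
    show Tendsto (fun t : ℝ => t ^ c / t) atTop (nhds 0)
    apply (tendsto_rpow_neg_atTop h1c).congr'
    filter_upwards [eventually_gt_atTop 0] with t ht0
    rw [show -(1 - c) = c - 1 by ring, Real.rpow_sub ht0, Real.rpow_one]
  · -- the limit condition
    set q : ℝ := (k₀:ℝ)⁻¹ with hq
    have hqpos : 0 < q := inv_pos.2 hk₀R
    set G : ℝ → ℝ := fun t => t ^ c * |N t| ^ q with hG
    set φ : ℝ → ℝ := fun t => c * Real.log t + q * Real.log (N t) with hφ
    have hGφ : (fun t => Real.exp (φ t)) =ᶠ[atTop] G := by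
      filter_upwards [hNne, eventually_gt_atTop 0] with t hNt ht0
      show Real.exp (c * Real.log t + q * Real.log (N t)) = t ^ c * |N t| ^ q
      rw [Real.exp_add]
      congr 1
      · rw [Real.rpow_def_of_pos ht0, mul_comm]
      · rw [← Real.log_abs, Real.rpow_def_of_pos (abs_pos.2 hNt), mul_comm]
    -- derivative of φ
    have hder : ∀ᶠ t in atTop, HasDerivAt φ ((c * (k₀:ℝ) * N t + t * M t) * N t /
        ((k₀:ℝ) * t * (N t)^2)) t := by
      filter_upwards [hNne, eventually_gt_atTop 0,
        hH.eventuallyDifferentiable hNH] with t hNt ht0 hNd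
      have h1 : HasDerivAt (fun s => c * Real.log s) (c * t⁻¹) t :=
        (Real.hasDerivAt_log (ne_of_gt ht0)).const_mul c
      have h3 : HasDerivAt N (M t) t := by
        rw [← congrFun hMN t]
        exact hNd.hasDerivAt
      have h2 : HasDerivAt (fun s => q * Real.log (N s)) (q * (M t / N t)) t :=
        (h3.log hNt).const_mul q
      have h4 := h1.add h2
      have heq : c * t⁻¹ + q * (M t / N t) =
          (c * (k₀:ℝ) * N t + t * M t) * N t / ((k₀:ℝ) * t * (N t)^2) := by
        rw [hq]
        field_simp
      rwa [heq] at h4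
    have hdiff : ∀ᶠ t in atTop, DifferentiableAt ℝ φ t := by
      filter_upwards [hder] with t ht using ht.differentiableAt
    -- sign of deriv φ is eventually constant
    have hsign : (∀ᶠ t in atTop, 0 ≤ deriv φ t) ∨ (∀ᶠ t in atTop, deriv φ t ≤ 0) := by
      have hidH : (fun t : ℝ => t) ∈ H := hLE _ IsLE.id
      have hcH : (fun _ : ℝ => c * (k₀:ℝ)) ∈ H := hLE _ (IsLE.const _)
      have hpH : (((fun _ : ℝ => c * (k₀:ℝ)) * N + (fun t : ℝ => t) * M) * N) ∈ H :=
        hH.mul_mem (hH.add_mem (hH.mul_mem hcH hNH) (hH.mul_mem hidH hMH)) hNH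
      have hderiv_eq : ∀ᶠ t in atTop, deriv φ t = (c * (k₀:ℝ) * N t + t * M t) * N t /
          ((k₀:ℝ) * t * (N t)^2) := by
        filter_upwards [hder] with t ht using ht.deriv
      have hNsq : ∀ᶠ t in atTop, (0:ℝ) < (k₀:ℝ) * t * (N t)^2 := by
        filter_upwards [eventually_gt_atTop 0, hNne] with t ht0 hNt
        exact mul_pos (mul_pos hk₀R ht0)
          (lt_of_le_of_ne (sq_nonneg (N t)) (Ne.symm (pow_ne_zero 2 hNt)))
      rcases hH.sign_trichotomy hpH with h | h | h
      · left
        filter_upwards [hderiv_eq, h] with t h1 h2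
        simp only [Pi.mul_apply, Pi.add_apply] at h2
        rw [h1, h2]
        simp
      · left
        filter_upwards [hderiv_eq, h, hNsq] with t h1 h2 h3
        rw [h1]
        exact div_nonneg (by simpa [Pi.mul_apply, Pi.add_apply] using le_of_lt h2)
          (le_of_lt h3)
      · right
        filter_upwards [hderiv_eq, h, hNsq] with t h1 h2 h3
        rw [h1]
        exact div_nonpos_of_nonpos_of_nonneg
          (by simpa [Pi.mul_apply, Pi.add_apply] using le_of_lt h2) (le_of_lt h3)
    -- conclude via trichotomy
    rcases trichotomy_of_deriv φ hdiff hsign with h | h | h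
    · right; left
      exact (Real.tendsto_exp_atTop.comp h).congr' hGφ
    · -- φ → -∞ would give Z k₀ : contradiction
      exfalso
      apply notZk₀'
      have hG0 : Tendsto G atTop (nhds 0) := (Real.tendsto_exp_atBot.comp h).congr' hGφ
      have hGk : Tendsto (fun t => G t ^ ((k₀:ℝ))) atTop (nhds 0) := by
        have h7 := hG0.rpow_const (p := (k₀:ℝ)) (Or.inr (le_of_lt hk₀R))
        rwa [Real.zero_rpow (ne_of_gt hk₀R)] at h7
      apply hGk.congr'
      filter_upwards [eventually_gt_atTop 0] with t ht0
      show (t ^ c * |N t| ^ q) ^ ((k₀:ℝ)) = t ^ (c * (k₀:ℝ)) * |N t|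
      rw [Real.mul_rpow (Real.rpow_nonneg (le_of_lt ht0) c)
          (Real.rpow_nonneg (abs_nonneg _) q),
        ← Real.rpow_mul (le_of_lt ht0), ← Real.rpow_mul (abs_nonneg _),
        hq, inv_mul_cancel₀ (ne_of_gt hk₀R), Real.rpow_one]
    · obtain ⟨l, hl⟩ := h
      left
      exact ⟨Real.exp l, ne_of_gt (Real.exp_pos l),
        ((Real.continuous_exp.tendsto l).comp hl).congr' hGφ⟩
  · -- Prec (t^c) (|M|^(-1/(k₀+1)))
    show Tendsto (fun t : ℝ => t ^ c / |M t| ^ (-(1:ℝ)/((k₀:ℝ)+1))) atTop (nhds 0)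
    have hm : (0:ℝ) < (k₀:ℝ) + 1 := by positivity
    have hZk1 : Z (k₀ + 1) := by rw [hk₀1]; exact hjZ
    have hZk1' : Tendsto (fun t => t ^ (c * ((k₀+1:ℕ):ℝ)) * |M t|) atTop (nhds 0) := hZk1
    have h2 : Tendsto (fun t => (t ^ (c * ((k₀+1:ℕ):ℝ)) * |M t|) ^ (((k₀:ℝ)+1)⁻¹))
        atTop (nhds 0) := by
      have h7 := hZk1'.rpow_const (p := ((k₀:ℝ)+1)⁻¹) (Or.inr (le_of_lt (inv_pos.2 hm)))
      rwa [Real.zero_rpow (ne_of_gt (inv_pos.2 hm))] at h7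
    apply h2.congr'
    filter_upwards [eventually_gt_atTop 0] with t ht0
    have hcast : ((k₀+1:ℕ):ℝ) = (k₀:ℝ)+1 := by push_cast; ring
    rcases eq_or_ne (M t) 0 with hMt | hMt
    · rw [hMt, abs_zero, mul_zero, Real.zero_rpow (ne_of_gt (inv_pos.2 hm)),
        Real.zero_rpow (div_ne_zero (by norm_num) (ne_of_gt hm)), div_zero]
    · rw [hcast, Real.mul_rpow (Real.rpow_nonneg (le_of_lt ht0) _) (abs_nonneg _),
        ← Real.rpow_mul (le_of_lt ht0), mul_inv_cancel_right₀ (ne_of_gt hm),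
        show -(1:ℝ)/((k₀:ℝ)+1) = -(((k₀:ℝ)+1)⁻¹) by rw [neg_div, one_div],
        Real.rpow_neg (abs_nonneg _), div_eq_mul_inv, inv_inv]

end
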